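/- Let n ≥ 3. Then ⋂_{v ∈ ℝⁿ} ⋃_{ξ ∈ v^⊥, ξ ≠ 0} Ker(𝔸[ξ]) = {0}; that is, if a matrix A ∈ M_sym0 has the property that for every v ∈ ℝⁿ there exists a nonzero ξ orthogonal to v with 𝔸[ξ]A = 0, then A = 0. -/

import Mathlib

/-- Euclidean dot product on `Fin n → ℝ`. -/
def dotp {n : ℕ} (a b : Fin n → ℝ) : ℝ := ∑ i, a i * b i

/-- Matrix–vector multiplication. -/
def mulv {n : ℕ} (M : Fin n → Fin n → ℝ) (v : Fin n → ℝ) (i : Fin n) : ℝ := ∑ j, M i j * v j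

/-- The symbol `𝔸[ξ]M := |ξ|²(Mξ⊗ξ + ξ⊗Mξ) − |ξ|⁴·M
  − ((ξᵀMξ)/(n−1))·[(n−2)·ξ⊗ξ + |ξ|²·Id]`. -/
noncomputable def symA (n : ℕ) (ξ : Fin n → ℝ) (M : Fin n → Fin n → ℝ) (i j : Fin n) : ℝ :=
  dotp ξ ξ * (mulv M ξ i * ξ j + ξ i * mulv M ξ j) - (dotp ξ ξ) ^ 2 * M i j
    - (dotp ξ (mulv M ξ)) / ((n : ℝ) - 1) *
        (((n : ℝ) - 2) * (ξ i * ξ j) + dotp ξ ξ * (if i = j then 1 else 0))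

namespace WaveConeAux

lemma dotp_comm {n : ℕ} (a b : Fin n → ℝ) : dotp a b = dotp b a := by
  simp [dotp, mul_comm]

lemma dotp_self_nonneg {n : ℕ} (a : Fin n → ℝ) : 0 ≤ dotp a a :=
  Finset.sum_nonneg fun i _ => mul_self_nonneg _

lemma dotp_self_eq_zero {n : ℕ} {a : Fin n → ℝ} (h : dotp a a = 0) : a = 0 := by
  funext i
  have := (Finset.sum_eq_zero_iff_of_nonneg
    (fun i _ => mul_self_nonneg (a i))).mp h i (Finset.mem_univ i)
  simpa [mul_self_eq_zero] using this

lemma dotp_self_pos {n : ℕ} {a : Fin n → ℝ} (h : a ≠ 0) : 0 < dotp a a :=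
  lt_of_le_of_ne (dotp_self_nonneg a) (fun h0 => h (dotp_self_eq_zero h0.symm))

lemma dotp_comb {n : ℕ} (c d : ℝ) (a b x : Fin n → ℝ) :
    dotp (fun i => c * a i + d * b i) x = c * dotp a x + d * dotp b x := by
  simp only [dotp, Finset.mul_sum, ← Finset.sum_add_distrib]
  exact Finset.sum_congr rfl (fun i _ => by ring)

lemma dotp_comb' {n : ℕ} (c d : ℝ) (a b x : Fin n → ℝ) :
    dotp x (fun i => c * a i + d * b i) = c * dotp x a + d * dotp x b := by
  rw [dotp_comm, dotp_comb, dotp_comm a x, dotp_comm b x]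

lemma dotp_comb3' {n : ℕ} (c d e : ℝ) (a b b' x : Fin n → ℝ) :
    dotp x (fun i => c * a i + d * b i + e * b' i)
      = c * dotp x a + d * dotp x b + e * dotp x b' := by
  simp only [dotp, Finset.mul_sum, ← Finset.sum_add_distrib]
  exact Finset.sum_congr rfl (fun i _ => by ring)

lemma dotp_comb3 {n : ℕ} (c d e : ℝ) (a b b' x : Fin n → ℝ) :
    dotp (fun i => c * a i + d * b i + e * b' i) x
      = c * dotp a x + d * dotp b x + e * dotp b' x := by
  simp only [dotp, Finset.mul_sum, ← Finset.sum_add_distrib]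
  exact Finset.sum_congr rfl (fun i _ => by ring)

def bilin {n : ℕ} (A : Fin n → Fin n → ℝ) (a b : Fin n → ℝ) : ℝ :=
  ∑ i, ∑ j, a i * A i j * b j

lemma bilin_eq_dotp_mulv {n : ℕ} (A : Fin n → Fin n → ℝ) (a b : Fin n → ℝ) :
    bilin A a b = dotp a (mulv A b) := by
  simp [bilin, dotp, mulv, Finset.mul_sum, mul_assoc]

lemma sum_mul_sum' {n : ℕ} (f g : Fin n → ℝ) :
    (∑ i, f i) * (∑ j, g j) = ∑ i, ∑ j, f i * g j := by
  rw [Finset.sum_mul_sum]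

lemma ite_dot {n : ℕ} (i : Fin n) (g : Fin n → ℝ) :
    (∑ j, (if i = j then (1:ℝ) else 0) * g j) = g i := by
  simp

lemma bilin_rank2 {n : ℕ} {A : Fin n → Fin n → ℝ} {k : ℝ} {p q : Fin n → ℝ}
    (hA : ∀ i j, A i j = k * (p i * q j + q i * p j)) (a b : Fin n → ℝ) :
    bilin A a b = k * (dotp p a * dotp q b + dotp q a * dotp p b) := by
  have h1 : bilin A a b = k * ((∑ i, p i * a i) * (∑ j, q j * b j))
      + k * ((∑ i, q i * a i) * (∑ j, p j * b j)) := by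
    rw [bilin, sum_mul_sum', sum_mul_sum', Finset.mul_sum, Finset.mul_sum,
      ← Finset.sum_add_distrib]
    refine Finset.sum_congr rfl fun i _ => ?_
    rw [Finset.mul_sum, Finset.mul_sum, ← Finset.sum_add_distrib]
    refine Finset.sum_congr rfl fun j _ => ?_
    rw [hA]; ring
  rw [h1]; simp only [dotp]; ring

lemma L1 {n : ℕ} {ξ : Fin n → ℝ} {A : Fin n → Fin n → ℝ} {u u' : Fin n → ℝ}
    (hker : ∀ i j, symA n ξ A i j = 0) (hu : dotp ξ u = 0) (hu' : dotp ξ u' = 0) :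
    (dotp ξ ξ)^2 * bilin A u' u
      + dotp ξ (mulv A ξ) / ((n:ℝ) - 1) * (dotp ξ ξ * dotp u' u) = 0 := by
  set s := dotp ξ ξ with hs
  set w := mulv A ξ with hw
  set t := dotp ξ (mulv A ξ) with ht
  have h0 : (∑ i, ∑ j, u' i * symA n ξ A i j * u j) = 0 := by
    refine Finset.sum_eq_zero fun i _ => Finset.sum_eq_zero fun j _ => ?_
    rw [hker i j]; ring
  have h1 : ∀ i j, u' i * symA n ξ A i j * u j =
      s * ((u' i * w i) * (ξ j * u j)) + s * ((ξ i * u' i) * (w j * u j))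
      - s^2 * (u' i * A i j * u j)
      - (t / ((n:ℝ)-1) * ((n:ℝ)-2)) * ((ξ i * u' i) * (ξ j * u j))
      - (t / ((n:ℝ)-1) * s) * (u' i * ((if i = j then (1:ℝ) else 0) * u j)) := by
    intro i j
    simp only [symA, ← hs, ← hw, ← ht]
    ring
  have h2 : (∑ i, ∑ j, u' i * symA n ξ A i j * u j)
      = s * ((∑ i, u' i * w i) * (∑ j, ξ j * u j))
        + s * ((∑ i, ξ i * u' i) * (∑ j, w j * u j))
        - s^2 * bilin A u' u
        - (t / ((n:ℝ)-1) * ((n:ℝ)-2)) * ((∑ i, ξ i * u' i) * (∑ j, ξ j * u j))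
        - (t / ((n:ℝ)-1) * s) * (∑ i, u' i * u i) := by
    simp only [h1, Finset.sum_sub_distrib, Finset.sum_add_distrib, ← Finset.mul_sum,
      sum_mul_sum', ite_dot, bilin]
  have e1 : (∑ j, ξ j * u j) = 0 := by rw [← hu, dotp]
  have e2 : (∑ i, ξ i * u' i) = 0 := by rw [← hu', dotp]
  have e3 : (∑ i, u' i * u i) = dotp u' u := rfl
  rw [h2, e1, e2, e3] at h0
  simp only [mul_zero, zero_mul, add_zero, zero_add, sub_zero, zero_sub] at h0
  linarith [h0]

lemma L1' {n : ℕ} {ξ : Fin n → ℝ} {A : Fin n → Fin n → ℝ} {u u' : Fin n → ℝ}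
    (hne : ((n:ℝ)-1) ≠ 0)
    (hker : ∀ i j, symA n ξ A i j = 0) (hu : dotp ξ u = 0) (hu' : dotp ξ u' = 0) :
    ((n:ℝ)-1) * ((dotp ξ ξ)^2 * bilin A u' u)
      + dotp ξ (mulv A ξ) * (dotp ξ ξ * dotp u' u) = 0 := by
  have h0 := L1 hker hu hu'
  field_simp at h0
  linarith

lemma ker_formula {n : ℕ} {ξ : Fin n → ℝ} {A : Fin n → Fin n → ℝ}
    (hker : ∀ i j, symA n ξ A i j = 0) (ht : dotp ξ (mulv A ξ) = 0)
    (hs : dotp ξ ξ ≠ 0) :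
    ∀ i j, A i j = (mulv A ξ i * ξ j + ξ i * mulv A ξ j) / (dotp ξ ξ) := by
  intro i j
  have h0 := hker i j
  rw [symA, ht] at h0
  field_simp
  have h1 : dotp ξ ξ * (A i j * dotp ξ ξ)
      = dotp ξ ξ * (mulv A ξ i * ξ j + ξ i * mulv A ξ j) := by linear_combination - h0
  exact mul_left_cancel₀ hs h1

lemma dotp_add_right {n : ℕ} (a x y : Fin n → ℝ) : dotp a (x + y) = dotp a x + dotp a y := by
  simp [dotp, mul_add, Finset.sum_add_distrib]

lemma dotp_smul_right {n : ℕ} (a x : Fin n → ℝ) (c : ℝ) : dotp a (c • x) = c * dotp a x := by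
  simp only [dotp, Pi.smul_apply, smul_eq_mul, Finset.mul_sum]
  exact Finset.sum_congr rfl fun i _ => by ring

lemma exists_perp {n : ℕ} (hn : 3 ≤ n) (a b : Fin n → ℝ) :
    ∃ z : Fin n → ℝ, z ≠ 0 ∧ dotp a z = 0 ∧ dotp b z = 0 := by
  let f : (Fin n → ℝ) →ₗ[ℝ] ℝ × ℝ :=
    { toFun := fun z => (dotp a z, dotp b z)
      map_add' := fun x y => by simp [dotp_add_right, Prod.ext_iff]
      map_smul' := fun c x => by simp [dotp_smul_right, Prod.ext_iff] }
  by_contra hc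
  push_neg at hc
  have hinj : Function.Injective f := by
    rw [← LinearMap.ker_eq_bot, LinearMap.ker_eq_bot']
    intro z hz
    by_contra hz0
    have h1 := hc z hz0
    have : dotp a z = 0 ∧ dotp b z = 0 := by
      have := congrArg Prod.fst hz
      have := congrArg Prod.snd hz
      constructor <;> simp_all [f]
    exact h1 this.1 this.2
  have hle := LinearMap.finrank_le_finrank_of_injective hinj
  simp [Module.finrank_pi] at hle
  omega

end WaveConeAux

open WaveConeAux in
/-- for `n ≥ 3`,
`⋂_{v ∈ ℝⁿ} ⋃_{ξ ∈ v^⊥ \ {0}} Ker 𝔸[ξ] = {0}` inside the symmetric trace-free matrices: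
if for every `v` there is a nonzero `ξ ⊥ v` with `𝔸[ξ]A = 0`, then `A = 0`. -/
theorem annihilator_codim_one_wave_cone_trivial {n : ℕ} (hn : 3 ≤ n)
    (A : Fin n → Fin n → ℝ) (hsym : ∀ i j, A i j = A j i) (htr : ∑ i, A i i = 0)
    (h : ∀ v : Fin n → ℝ, ∃ ξ : Fin n → ℝ, ξ ≠ 0 ∧ dotp ξ v = 0 ∧
      ∀ i j, symA n ξ A i j = 0) :
    ∀ i j, A i j = 0 := by
  have hn3 : (3:ℝ) ≤ (n:ℝ) := by exact_mod_cast hn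
  have hne : ((n:ℝ) - 1) ≠ 0 := by linarith
  obtain ⟨ξ₁, h1ne, -, hker₁⟩ := h 0
  obtain ⟨ξ₂, h2ne, h21, hker₂⟩ := h ξ₁
  have h12 : dotp ξ₁ ξ₂ = 0 := by rw [dotp_comm]; exact h21
  have s₁pos : 0 < dotp ξ₁ ξ₁ := dotp_self_pos h1ne
  have s₂pos : 0 < dotp ξ₂ ξ₂ := dotp_self_pos h2ne
  set s₁ := dotp ξ₁ ξ₁ with hs₁
  set s₂ := dotp ξ₂ ξ₂ with hs₂
  set t₁ := dotp ξ₁ (mulv A ξ₁) with ht₁def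
  set t₂ := dotp ξ₂ (mulv A ξ₂) with ht₂def
  -- step 1 : t₁ = t₂ = 0
  have E12 := L1' hne hker₂ h21 h21
  have E21 := L1' hne hker₁ h12 h12
  rw [bilin_eq_dotp_mulv] at E12 E21
  -- E12 : (n-1) * (s₂^2 * t₁) + t₂ * (s₂ * s₁) = 0
  -- E21 : (n-1) * (s₁^2 * t₂) + t₁ * (s₁ * s₂) = 0
  have ht₁ : t₁ = 0 := by
    have key : t₁ * (s₁^2 * s₂^2 * (((n:ℝ)-1)^2 - 1)) = 0 := by
      linear_combination ((n:ℝ)-1) * s₁^2 * E12 - s₁ * s₂ * E21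
    have hfac : 0 < ((n:ℝ)-1)^2 - 1 := by nlinarith
    have hpos : 0 < s₁^2 * s₂^2 * (((n:ℝ)-1)^2 - 1) :=
      mul_pos (mul_pos (pow_pos s₁pos 2) (pow_pos s₂pos 2)) hfac
    rcases mul_eq_zero.mp key with h' | h'
    · exact h'
    · exact absurd h' (ne_of_gt hpos)
  have ht₂ : t₂ = 0 := by
    have key : t₂ * (s₁^2 * s₂^2 * (((n:ℝ)-1)^2 - 1)) = 0 := by
      linear_combination ((n:ℝ)-1) * s₂^2 * E21 - s₁ * s₂ * E12
    have hfac : 0 < ((n:ℝ)-1)^2 - 1 := by nlinarith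
    have hpos : 0 < s₁^2 * s₂^2 * (((n:ℝ)-1)^2 - 1) :=
      mul_pos (mul_pos (pow_pos s₁pos 2) (pow_pos s₂pos 2)) hfac
    rcases mul_eq_zero.mp key with h' | h'
    · exact h'
    · exact absurd h' (ne_of_gt hpos)
  -- step 2 : A = (w₁ ⊗ ξ₁ + ξ₁ ⊗ w₁)/s₁, then A = k (ξ₁⊗ξ₂ + ξ₂⊗ξ₁)
  have hA1 := ker_formula hker₁ ht₁ (ne_of_gt s₁pos)
  have hw₂ : ∀ i, mulv A ξ₂ i = ξ₁ i * (dotp (mulv A ξ₁) ξ₂ / s₁) := by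
    intro i
    have : mulv A ξ₂ i
        = (∑ j, (mulv A ξ₁ i * (ξ₁ j * ξ₂ j) + ξ₁ i * (mulv A ξ₁ j * ξ₂ j))) / s₁ := by
      rw [mulv, Finset.sum_div]
      refine Finset.sum_congr rfl fun j _ => ?_
      rw [hA1 i j]
      ring
    rw [this, Finset.sum_add_distrib, ← Finset.mul_sum, ← Finset.mul_sum]
    have e1 : (∑ j, ξ₁ j * ξ₂ j) = 0 := h12
    have e2 : (∑ j, mulv A ξ₁ j * ξ₂ j) = dotp (mulv A ξ₁) ξ₂ := rfl
    rw [e1, e2]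
    ring
  set k : ℝ := dotp (mulv A ξ₁) ξ₂ / (s₁ * s₂) with hkdef
  have hA : ∀ i j, A i j = k * (ξ₁ i * ξ₂ j + ξ₂ i * ξ₁ j) := by
    intro i j
    have h2f := ker_formula hker₂ ht₂ (ne_of_gt s₂pos) i j
    rw [h2f, hw₂ i, hw₂ j, hkdef, ← hs₂]
    field_simp
  -- step 3 : third direction
  obtain ⟨ξ₃, h3ne, h3perp, hker₃⟩ := h (fun i => ξ₁ i + ξ₂ i)
  have s₃pos : 0 < dotp ξ₃ ξ₃ := dotp_self_pos h3ne
  set s₃ := dotp ξ₃ ξ₃ with hs₃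
  set t₃ := dotp ξ₃ (mulv A ξ₃) with ht₃def
  set α := dotp ξ₃ ξ₁ with hαdef
  have h32 : dotp ξ₃ ξ₂ = -α := by
    have e : dotp ξ₃ (fun i => ξ₁ i + ξ₂ i) = dotp ξ₃ ξ₁ + dotp ξ₃ ξ₂ := by
      simpa using dotp_comb' 1 1 ξ₁ ξ₂ ξ₃
    rw [h3perp] at e
    linarith [e]
  have h13 : dotp ξ₁ ξ₃ = α := by rw [dotp_comm]
  have h23 : dotp ξ₂ ξ₃ = -α := by rw [dotp_comm]; exact h32
  have hk0 : k = 0 := by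
    by_cases hα : α = 0
    · -- ξ₃ ⊥ ξ₁, ξ₂
      have du : dotp ξ₃ ξ₁ = 0 := by rw [← hαdef]; exact hα
      have du' : dotp ξ₃ ξ₂ = 0 := by simp [h32, hα]
      have E := L1' hne hker₃ du du'
      rw [bilin_rank2 hA] at E
      -- bilin A ξ₂ ξ₁ = k * (dotp ξ₁ ξ₂ * dotp ξ₂ ξ₁ + dotp ξ₂ ξ₂ * dotp ξ₁ ξ₁)
      rw [h12, h21] at E
      have key : k * (((n:ℝ)-1) * s₃^2 * s₂ * s₁) = 0 := by linear_combination E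
      have hn1pos : (0:ℝ) < (n:ℝ)-1 := by linarith
      have hpos : 0 < ((n:ℝ)-1) * s₃^2 * s₂ * s₁ :=
        mul_pos (mul_pos (mul_pos hn1pos (pow_pos s₃pos 2)) s₂pos) s₁pos
      rcases mul_eq_zero.mp key with h' | h'
      · exact h'
      · exact absurd h' (ne_of_gt hpos)
    · -- α ≠ 0
      have hn1pos : (0:ℝ) < (n:ℝ)-1 := by linarith
      have hs₃ne : s₃ ≠ 0 := ne_of_gt s₃pos
      have hs₃2ne : s₃^2 ≠ 0 := pow_ne_zero 2 hs₃ne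
      -- X ≠ 0
      have hX : s₃ * s₁ - α^2 ≠ 0 := by
        intro hX0
        have hrr : dotp (fun i => s₁ * ξ₃ i + (-α) * ξ₁ i)
            (fun i => s₁ * ξ₃ i + (-α) * ξ₁ i) = 0 := by
          rw [dotp_comb, dotp_comb', dotp_comb', h13]
          linear_combination s₁ * hX0
        have hr0 := dotp_self_eq_zero hrr
        have h0 : dotp ξ₂ (fun i => s₁ * ξ₃ i + (-α) * ξ₁ i) = 0 := by
          rw [hr0]; simp [dotp]
        rw [dotp_comb', h23, h21] at h0
        apply hα
        have h0' : s₁ * α = 0 := by linarith [h0]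
        exact (mul_eq_zero.mp h0').resolve_left (ne_of_gt s₁pos)
      -- main test vectors
      have du : dotp ξ₃ (fun i => s₃ * ξ₁ i + (-α) * ξ₃ i) = 0 := by
        rw [dotp_comb']; ring
      have du' : dotp ξ₃ (fun i => s₃ * ξ₂ i + α * ξ₃ i) = 0 := by
        rw [dotp_comb', h32]; ring
      have d1u : dotp ξ₁ (fun i => s₃ * ξ₁ i + (-α) * ξ₃ i) = s₃ * s₁ - α^2 := by
        rw [dotp_comb', h13]; ring
      have d2u : dotp ξ₂ (fun i => s₃ * ξ₁ i + (-α) * ξ₃ i) = α^2 := by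
        rw [dotp_comb', h23, h21]; ring
      have d1u' : dotp ξ₁ (fun i => s₃ * ξ₂ i + α * ξ₃ i) = α^2 := by
        rw [dotp_comb', h12, h13]; ring
      have d2u' : dotp ξ₂ (fun i => s₃ * ξ₂ i + α * ξ₃ i) = s₃ * s₂ - α^2 := by
        rw [dotp_comb', h23]; ring
      have duu : dotp (fun i => s₃ * ξ₁ i + (-α) * ξ₃ i)
          (fun i => s₃ * ξ₁ i + (-α) * ξ₃ i) = s₃ * (s₃ * s₁ - α^2) := by
        rw [dotp_comb, d1u, du]; ring
      have du'u : dotp (fun i => s₃ * ξ₂ i + α * ξ₃ i)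
          (fun i => s₃ * ξ₁ i + (-α) * ξ₃ i) = s₃ * α^2 := by
        rw [dotp_comb, d2u, du]; ring
      have E1 := L1' hne hker₃ du du
      have E3 := L1' hne hker₃ du du'
      rw [bilin_rank2 hA, d1u, d2u, duu] at E1
      rw [bilin_rank2 hA, d1u, d2u, d1u', d2u', du'u] at E3
      have hE1 : 2*((n:ℝ)-1)*k*α^2 + t₃ = 0 := by
        have key : (s₃ * s₁ - α^2) * (s₃^2 * (2*((n:ℝ)-1)*k*α^2 + t₃)) = 0 := by
          linear_combination E1
        rcases mul_eq_zero.mp key with h' | h'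
        · exact absurd h' hX
        · rcases mul_eq_zero.mp h' with h'' | h''
          · exact absurd h'' hs₃2ne
          · exact h''
      have hE3 : ((n:ℝ)-1)*k*(α^4 + (s₃*s₁-α^2)*(s₃*s₂-α^2)) + t₃*α^2 = 0 := by
        have key : s₃^2 * (((n:ℝ)-1)*k*(α^4 + (s₃*s₁-α^2)*(s₃*s₂-α^2)) + t₃*α^2) = 0 := by
          linear_combination E3
        rcases mul_eq_zero.mp key with h' | h'
        · exact absurd h' hs₃2ne
        · exact h'
      by_cases hP : (s₃*s₁-α^2)*(s₃*s₂-α^2) - α^4 = 0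
      · -- degenerate case: ξ₃ lies in the span of ξ₁, ξ₂
        have hplane : s₁*s₂*s₃ - (s₁+s₂)*α^2 = 0 := by
          have key : s₃ * (s₁*s₂*s₃ - (s₁+s₂)*α^2) = 0 := by linear_combination hP
          rcases mul_eq_zero.mp key with h' | h'
          · exact absurd h' hs₃ne
          · exact h'
        obtain ⟨z, hzne, hz1, hz2⟩ := exists_perp hn ξ₁ ξ₂
        have hrr : dotp
            (fun i => (s₁*s₂) * ξ₃ i + (-(α*s₂)) * ξ₁ i + (α*s₁) * ξ₂ i)
            (fun i => (s₁*s₂) * ξ₃ i + (-(α*s₂)) * ξ₁ i + (α*s₁) * ξ₂ i) = 0 := by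
          rw [dotp_comb3, dotp_comb3', dotp_comb3', dotp_comb3', h13, h23, h12, h21, h32]
          linear_combination (s₁*s₂) * hplane
        have hr0 := dotp_self_eq_zero hrr
        have hz3 : dotp ξ₃ z = 0 := by
          have h0 : dotp
              (fun i => (s₁*s₂) * ξ₃ i + (-(α*s₂)) * ξ₁ i + (α*s₁) * ξ₂ i) z = 0 := by
            rw [hr0]; simp [dotp]
          rw [dotp_comb3, hz1, hz2] at h0
          have h0' : (s₁*s₂) * dotp ξ₃ z = 0 := by linarith [h0]
          rcases mul_eq_zero.mp h0' with h' | h'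
          · exact absurd h' (ne_of_gt (mul_pos s₁pos s₂pos))
          · exact h'
        have Ez := L1' hne hker₃ hz3 hz3
        rw [bilin_rank2 hA, hz1, hz2] at Ez
        have hzz : 0 < dotp z z := dotp_self_pos hzne
        have ht₃ : t₃ = 0 := by
          have key : t₃ * (s₃ * dotp z z) = 0 := by linear_combination Ez
          rcases mul_eq_zero.mp key with h' | h'
          · exact h'
          · exact absurd h' (ne_of_gt (mul_pos s₃pos hzz))
        have key : k * (2*((n:ℝ)-1)*α^2) = 0 := by
          rw [ht₃] at hE1; linear_combination hE1
        have hα2 : 0 < α^2 := lt_of_le_of_ne (sq_nonneg α) (Ne.symm (pow_ne_zero 2 hα))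
        rcases mul_eq_zero.mp key with h' | h'
        · exact h'
        · exact absurd h' (ne_of_gt (mul_pos (mul_pos (by norm_num : (0:ℝ) < 2) hn1pos) hα2))
      · -- nondegenerate case
        have key : k * (((n:ℝ)-1) * ((s₃*s₁-α^2)*(s₃*s₂-α^2) - α^4)) = 0 := by
          linear_combination hE3 - α^2 * hE1
        rcases mul_eq_zero.mp key with h' | h'
        · exact h'
        · exfalso
          rcases mul_eq_zero.mp h' with h'' | h''
          · exact hne h''
          · exact hP h''
  intro i j
  rw [hA i j, hk0, zero_mul]
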